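/- The equation y² + 23·z² = -5·(x⁴ + 115) has a solution (x,y,z) ∈ (ℚ_p)³ for every prime p, but it has no solution (x,y,z) ∈ ℝ³ (and hence no solution in ℚ³). -/

import Mathlib

open Polynomial

private lemma padic_key {p : ℕ} [Fact p.Prime] (x : ℤ_[p]) :
    PadicInt.toZMod x = 0 ↔ ‖x‖ < 1 := by
  rw [PadicInt.norm_lt_one_iff_dvd, ← Ideal.mem_span_singleton,
    ← PadicInt.maximalIdeal_eq_span_p, ← PadicInt.ker_toZMod, RingHom.mem_ker]

private lemma padic_coe_ofNat {p : ℕ} [Fact p.Prime] (n : ℕ) [n.AtLeastTwo] :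
    ((ofNat(n) : ℤ_[p]) : ℚ_[p]) = ofNat(n) :=
  PadicInt.coe_natCast (p := p) (OfNat.ofNat n)

private lemma sqrtA {p : ℕ} [Fact p.Prime] (c a : ℤ_[p])
    (h0 : PadicInt.toZMod (a ^ 2 + c) = 0)
    (h1 : PadicInt.toZMod (2 * a) ≠ 0) :
    ∃ y : ℤ_[p], y ^ 2 + c = 0 := by
  set F : Polynomial ℤ_[p] := X ^ 2 + C c with hF
  have hev : F.eval a = a ^ 2 + c := by simp [hF]
  have hdev : F.derivative.eval a = 2 * a := by
    simp [hF]
    norm_num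
  have h0' : ‖F.eval a‖ < 1 := by rw [hev, ← padic_key]; exact h0
  have h1' : ‖F.derivative.eval a‖ = 1 := by
    rcases lt_or_eq_of_le (PadicInt.norm_le_one (F.derivative.eval a)) with h | h
    · exact absurd ((padic_key _).2 h) (by rw [hdev]; exact h1)
    · exact h
  obtain ⟨z, hz, -⟩ := hensels_lemma (F := F) (a := a) (by rw [Polynomial.coe_aeval_eq_eval, h1']; simpa using h0')
  exact ⟨z, by simpa [hF, Polynomial.coe_aeval_eq_eval] using hz⟩


private lemma zmod_prime_ne {p : ℕ} [Fact p.Prime] {q : ℕ} (hq : q.Prime) (hpq : p ≠ q) :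
    ((q : ℕ) : ZMod p) ≠ 0 := by
  rw [Ne, ZMod.natCast_eq_zero_iff]
  exact fun h => hpq ((Nat.prime_dvd_prime_iff_eq Fact.out hq).1 h)


private lemma generic {p : ℕ} [Fact p.Prime] (hp2 : p ≠ 2) (hp5 : p ≠ 5) (hp23 : p ≠ 23) :
    ∃ y z : ℚ_[p], y ^ 2 + 23 * z ^ 2 = -575 := by
  have h2 : (2 : ZMod p) ≠ 0 := by exact_mod_cast zmod_prime_ne (by norm_num) hp2
  have h5 : (5 : ZMod p) ≠ 0 := by exact_mod_cast zmod_prime_ne (by norm_num) hp5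
  have h23 : (23 : ZMod p) ≠ 0 := by exact_mod_cast zmod_prime_ne (by norm_num) hp23
  have h575 : (575 : ZMod p) ≠ 0 := by
    have : (575 : ZMod p) = 5 * 5 * 23 := by norm_num
    rw [this]
    exact mul_ne_zero (mul_ne_zero h5 h5) h23
  obtain ⟨a, b, hab⟩ : ∃ a b : ZMod p, a ^ 2 + (23 * b ^ 2 + 575) = 0 := by
    obtain ⟨a, b, h⟩ := FiniteField.exists_root_sum_quadratic
      (f := (X ^ 2 : (ZMod p)[X])) (g := C 23 * X ^ 2 + C 575)
      (degree_X_pow 2) (by simpa using degree_quadratic (b := 0) (c := 575) h23)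
      (by rw [ZMod.card]; exact Nat.odd_iff.1 ((Fact.out : p.Prime).odd_of_ne_two hp2))
    exact ⟨a, b, by simpa using h⟩
  set a' : ℤ_[p] := (a.val : ℤ_[p]) with ha'
  set b' : ℤ_[p] := (b.val : ℤ_[p]) with hb'
  have hta : PadicInt.toZMod a' = a := by
    rw [ha', map_natCast, ZMod.natCast_val, ZMod.cast_id]
  have htb : PadicInt.toZMod b' = b := by
    rw [hb', map_natCast, ZMod.natCast_val, ZMod.cast_id]
  by_cases ha : a = 0
  · have hb : b ≠ 0 := by
      intro hb0
      rw [ha, hb0] at hab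
      simp at hab
      exact h575 hab
    obtain ⟨w, hw⟩ := sqrtA (23 * 575 : ℤ_[p]) (23 * b')
      (by
        have key : (23 : ZMod p) * b ^ 2 + 575 = 0 := by
          have := hab; rw [ha] at this; simpa using this
        have : PadicInt.toZMod ((23 * b') ^ 2 + 23 * 575)
            = 23 * ((23 : ZMod p) * b ^ 2 + 575) := by
          push_cast [map_add, map_mul, map_pow, map_ofNat, htb]
          ring
        rw [this, key, mul_zero])
      (by
        have : PadicInt.toZMod (2 * (23 * b')) = 2 * 23 * b := by
          push_cast [map_mul, map_ofNat, htb]; ring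
        rw [this]
        exact mul_ne_zero (mul_ne_zero h2 h23) hb)
    refine ⟨0, (w : ℚ_[p]) / 23, ?_⟩
    have hw' : (w : ℚ_[p]) ^ 2 + 23 * 575 = 0 := by
      have := congrArg (fun t : ℤ_[p] => (t : ℚ_[p])) hw
      push_cast [padic_coe_ofNat] at this
      convert this using 2 <;> norm_num
    have h23Q : (23 : ℚ_[p]) ≠ 0 := by norm_num
    field_simp
    linear_combination hw'
  · obtain ⟨y, hy⟩ := sqrtA (23 * b' ^ 2 + 575 : ℤ_[p]) a'
      (by
        have : PadicInt.toZMod (a' ^ 2 + (23 * b' ^ 2 + 575))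
            = a ^ 2 + (23 * b ^ 2 + 575) := by
          push_cast [map_add, map_mul, map_pow, map_ofNat, hta, htb]
          rfl
        rw [this, hab])
      (by
        have : PadicInt.toZMod (2 * a') = 2 * a := by
          push_cast [map_mul, map_ofNat, hta]
          rfl
        rw [this]
        exact mul_ne_zero h2 ha)
    refine ⟨(y : ℚ_[p]), (b' : ℚ_[p]), ?_⟩
    have : (y : ℚ_[p]) ^ 2 + (23 * (b' : ℚ_[p]) ^ 2 + 575) = 0 := by
      have := congrArg (fun t : ℤ_[p] => (t : ℚ_[p])) hy
      push_cast [padic_coe_ofNat] at this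
      convert this using 2 <;> norm_num
    linear_combination this

private lemma case2 [Fact (Nat.Prime 2)] : ∃ x y z : ℚ_[2], y ^ 2 + 23 * z ^ 2 = -5 * (x ^ 4 + 115) := by
  have hn2 : ‖(2 : ℤ_[2])‖ = (2 : ℝ)⁻¹ := by
    have h := PadicInt.norm_p (p := 2)
    norm_num at h
    rw [h]; norm_num
  obtain ⟨s, hs, -⟩ := hensels_lemma (p := 2) (F := X ^ 2 + C (23 : ℤ_[2])) (a := 1)
    (by
      have hev : (X ^ 2 + C (23 : ℤ_[2])).eval 1 = 2 ^ 3 * 3 := by norm_num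
      have hdev : (X ^ 2 + C (23 : ℤ_[2])).derivative.eval 1 = 2 := by simp; norm_num
      change ‖(X ^ 2 + C (23 : ℤ_[2])).eval 1‖ < ‖(X ^ 2 + C (23 : ℤ_[2])).derivative.eval 1‖ ^ 2
      rw [hev, hdev, norm_mul, norm_pow, hn2]
      calc ((2:ℝ)⁻¹) ^ 3 * ‖(3 : ℤ_[2])‖ ≤ ((2:ℝ)⁻¹) ^ 3 * 1 := by
              gcongr; exact PadicInt.norm_le_one 3
        _ < ((2:ℝ)⁻¹) ^ 2 := by norm_num)
  have hs' : s ^ 2 + 23 = 0 := by change (X ^ 2 + C (23 : ℤ_[2])).eval s = 0 at hs; simpa using hs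
  have hS : (s : ℚ_[2]) ^ 2 + 23 = 0 := by
    have := congrArg (fun u : ℤ_[2] => (u : ℚ_[2])) hs'
    push_cast [padic_coe_ofNat] at this
    convert this using 2
  have hS0 : (s : ℚ_[2]) ≠ 0 := by
    intro h
    rw [h] at hS
    norm_num at hS
  refine ⟨0, -287, 288 / (s : ℚ_[2]), ?_⟩
  field_simp
  linear_combination 82944 * hS

private lemma case5 [Fact (Nat.Prime 5)] : ∃ x y z : ℚ_[5], y ^ 2 + 23 * z ^ 2 = -5 * (x ^ 4 + 115) := by
  obtain ⟨i, hi⟩ := sqrtA (p := 5) 1 2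
    (by
      have : ((2 : ℤ_[5]) ^ 2 + 1) = ((5 : ℕ) : ℤ_[5]) := by norm_num
      rw [this, map_natCast]
      exact ZMod.natCast_self 5)
    (by
      have : (2 * 2 : ℤ_[5]) = ((4 : ℕ) : ℤ_[5]) := by norm_num
      rw [this, map_natCast]
      rw [Ne, ZMod.natCast_eq_zero_iff]
      decide)
  refine ⟨0, 0, 5 * (i : ℚ_[5]), ?_⟩
  have hi' : (i : ℚ_[5]) ^ 2 + 1 = 0 := by
    have := congrArg (fun t : ℤ_[5] => (t : ℚ_[5])) hi
    push_cast at this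
    convert this using 2
  linear_combination 575 * hi'


private lemma case23 [Fact (Nat.Prime 23)] : ∃ x y z : ℚ_[23], y ^ 2 + 23 * z ^ 2 = -5 * (x ^ 4 + 115) := by
  obtain ⟨t, ht⟩ := sqrtA (p := 23) (5 + 575 * 23 ^ 4) 8
    (by
      have : ((8 : ℤ_[23]) ^ 2 + (5 + 575 * 23 ^ 4)) = ((23 : ℕ) : ℤ_[23]) * (3 + 25 * 23 ^ 4) := by
        norm_num
      rw [this, map_mul, map_natCast, ZMod.natCast_self, zero_mul])
    (by
      have : (2 * 8 : ℤ_[23]) = ((16 : ℕ) : ℤ_[23]) := by norm_num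
      rw [this, map_natCast]
      rw [Ne, ZMod.natCast_eq_zero_iff]
      decide)
  have h23 : (23 : ℚ_[23]) ≠ 0 := by norm_num
  refine ⟨(23 : ℚ_[23])⁻¹, (t : ℚ_[23]) / 23 ^ 2, 0, ?_⟩
  have ht' : (t : ℚ_[23]) ^ 2 + (5 + 575 * 23 ^ 4) = 0 := by
    have := congrArg (fun u : ℤ_[23] => (u : ℚ_[23])) ht
    push_cast [padic_coe_ofNat] at this
    convert this using 2
  field_simp
  linear_combination ht'


/-- The Châtelet equation `y² + 23·z² = -5·(x⁴ + 115)` has a `ℚ_p`-solution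
for every prime `p`, but no real solution (hence no rational solution). -/
theorem stmt_13 :
    (∀ (p : ℕ) [Fact p.Prime],
      ∃ x y z : ℚ_[p], y ^ 2 + 23 * z ^ 2 = -5 * (x ^ 4 + 115)) ∧
    (¬ ∃ x y z : ℝ, y ^ 2 + 23 * z ^ 2 = -5 * (x ^ 4 + 115)) ∧
    (¬ ∃ x y z : ℚ, y ^ 2 + 23 * z ^ 2 = -5 * (x ^ 4 + 115)) := by
  refine ⟨?_, ?_, ?_⟩
  · intro p hp
    by_cases hp2 : p = 2
    · subst hp2; exact case2
    · by_cases hp5 : p = 5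
      · subst hp5; exact case5
      · by_cases hp23 : p = 23
        · subst hp23; exact case23
        · obtain ⟨y, z, h⟩ := generic hp2 hp5 hp23
          exact ⟨0, y, z, by linear_combination h⟩
  · rintro ⟨x, y, z, h⟩
    nlinarith [sq_nonneg y, sq_nonneg z, sq_nonneg (x ^ 2)]
  · rintro ⟨x, y, z, h⟩
    nlinarith [sq_nonneg y, sq_nonneg z, sq_nonneg (x ^ 2)]
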